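/- Let c ≥ 1, α > 0, β > 0, and ξ' ∈ (0,1); set d := 2c/(2c − 1). Let K be a real number with K ≥ 1, K ≥ ( 2ξ'/(α^{2 − 1/c}·(2c − 1)·β) )^{1/(1 − ξ')}, and β·α^{2 − 1/c}/K^{ξ'} ≤ 1. Define the sequence u₀ = 0, u_{k+1} = ( 1 − β·α^{2 − 1/c}·(k + K)^{−ξ'} )·u_k + α²·(k + K)^{−d·ξ'}. Then for all natural numbers k, u_k ≤ (2·α^{1/c}/β)·(k + K)^{−(d − 1)·ξ'}. -/

import Mathlib

set_option maxHeartbeats 1000000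

/-- induction lemma, smooth sub-exponential case, with
`d := 2c/(2c-1)`. -/
theorem auxiliary_sequence_bound_subexponential
    (c α β ξ' : ℝ) (hc : 1 ≤ c) (hα : 0 < α) (hβ : 0 < β)
    (hξ' : ξ' ∈ Set.Ioo (0 : ℝ) 1) (K : ℝ) (hK1 : 1 ≤ K)
    (hK2 : (2 * ξ' / (α ^ (2 - 1 / c) * (2 * c - 1) * β)) ^ ((1 : ℝ) / (1 - ξ')) ≤ K)
    (hK3 : β * α ^ (2 - 1 / c) / K ^ ξ' ≤ 1)
    (u : ℕ → ℝ) (hu0 : u 0 = 0)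
    (hrec : ∀ k, u (k + 1) =
      (1 - β * α ^ (2 - 1 / c) * ((k : ℝ) + K) ^ (-ξ')) * u k +
        α ^ 2 * ((k : ℝ) + K) ^ (-(2 * c / (2 * c - 1) * ξ'))) :
    ∀ k, u k ≤ (2 * α ^ (1 / c) / β) * ((k : ℝ) + K) ^ (-((2 * c / (2 * c - 1) - 1) * ξ')) := by
  obtain ⟨hξ0, hξ1⟩ := hξ'
  have h2c : (0:ℝ) < 2 * c - 1 := by linarith
  set A : ℝ := α ^ (2 - 1 / c) with hAdef
  have hA : 0 < A := Real.rpow_pos_of_pos hα _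
  set s : ℝ := (2 * c / (2 * c - 1) - 1) * ξ' with hsdef
  have hds : 2 * c / (2 * c - 1) - 1 = 1 / (2 * c - 1) := by field_simp; ring
  have hs0 : 0 < s := by rw [hsdef, hds]; positivity
  have hs1 : s < 1 := by
    rw [hsdef, hds]
    calc 1 / (2 * c - 1) * ξ' ≤ 1 * ξ' := by
          apply mul_le_mul_of_nonneg_right _ hξ0.le
          rw [div_le_one h2c]; linarith
      _ < 1 := by linarith
  set C : ℝ := 2 * α ^ (1 / c) / β with hCdef
  have hC : 0 < C := by positivity
  have hKpos : (0:ℝ) < K := lt_of_lt_of_le one_pos hK1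
  have hBase : 0 < 2 * ξ' / (A * (2 * c - 1) * β) := by positivity
  have hkey : 2 * s / (β * A) ≤ K ^ (1 - ξ') := by
    have h1 : 2 * s / (β * A) = 2 * ξ' / (A * (2 * c - 1) * β) := by
      rw [hsdef, hds]; field_simp
    have hexp1 : (1:ℝ) / (1 - ξ') * (1 - ξ') = 1 := by
      rw [one_div, inv_mul_cancel₀ (by linarith : (1:ℝ) - ξ' ≠ 0)]
    rw [h1]
    calc 2 * ξ' / (A * (2 * c - 1) * β)
        = ((2 * ξ' / (A * (2 * c - 1) * β)) ^ ((1:ℝ) / (1 - ξ'))) ^ (1 - ξ') := by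
          rw [← Real.rpow_mul hBase.le, hexp1, Real.rpow_one]
      _ ≤ K ^ (1 - ξ') := Real.rpow_le_rpow (Real.rpow_nonneg hBase.le _) hK2 (by linarith)
  intro k
  induction k with
  | zero =>
    rw [hu0]
    positivity
  | succ k ih =>
    set t : ℝ := (k : ℝ) + K with htdef
    have htK : K ≤ t := by rw [htdef]; exact le_add_of_nonneg_left (Nat.cast_nonneg k)
    have ht1 : (1:ℝ) ≤ t := le_trans hK1 htK
    have ht0 : (0:ℝ) < t := lt_of_lt_of_le one_pos ht1
    have hcast : ((k + 1 : ℕ) : ℝ) + K = t + 1 := by rw [htdef]; push_cast; ring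
    have hfac0 : 0 ≤ 1 - β * A * t ^ (-ξ') := by
      have h1 : t ^ (-ξ') ≤ K ^ (-ξ') :=
        Real.rpow_le_rpow_of_nonpos hKpos htK (by linarith)
      have h2 : β * A * t ^ (-ξ') ≤ β * A * K ^ (-ξ') :=
        mul_le_mul_of_nonneg_left h1 (by positivity)
      have h3 : β * A * K ^ (-ξ') = β * A / K ^ ξ' := by
        rw [Real.rpow_neg hKpos.le, div_eq_mul_inv]
      linarith [hK3, h2, h3.le]
    have hexp : -(2 * c / (2 * c - 1) * ξ') = -ξ' + -s := by rw [hsdef]; ring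
    have hc0 : c ≠ 0 := by positivity
    have hα2 : α ^ 2 = A * (β * C / 2) := by
      have h1 : A * (β * C / 2) = α ^ (2 - 1 / c) * α ^ (1 / c) := by
        rw [hAdef, hCdef]; field_simp
      have h2 : 2 - 1 / c + 1 / c = 2 := by ring
      rw [h1, ← Real.rpow_add hα, h2, Real.rpow_two]
    have hrw : u (k + 1)
        = (1 - β * A * t ^ (-ξ')) * u k + A * (β * C / 2) * (t ^ (-ξ') * t ^ (-s)) := by
      rw [hrec k, hexp, Real.rpow_add ht0, hα2]
    have hts : (0:ℝ) < t ^ (-s) := Real.rpow_pos_of_pos ht0 _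
    have htξ : (0:ℝ) < t ^ (-ξ') := Real.rpow_pos_of_pos ht0 _
    -- Bernoulli step
    have hbern : t ^ (-s) - (t + 1) ^ (-s) ≤ s / t * t ^ (-s) := by
      have h1 : ((1:ℝ) + 1/t) ^ s ≤ 1 + s * (1/t) :=
        rpow_one_add_le_one_add_mul_self (by nlinarith [one_div_pos.mpr ht0]) hs0.le hs1.le
      have h2 : (t + 1) ^ (-s) = t ^ (-s) * ((1 + 1/t) ^ s)⁻¹ := by
        rw [← Real.rpow_neg (by positivity), ← Real.mul_rpow ht0.le (by positivity)]
        congr 1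
        field_simp
      have hpos : (0:ℝ) < (1 + 1/t) ^ s := Real.rpow_pos_of_pos (by positivity) _
      have h3 : (1 + s * (1/t))⁻¹ ≤ ((1 + 1/t) ^ s)⁻¹ := inv_anti₀ hpos h1
      have h4 : t ^ (-s) * (1 + s * (1/t))⁻¹ ≤ (t + 1) ^ (-s) := by
        rw [h2]; exact mul_le_mul_of_nonneg_left h3 hts.le
      have hd : (0:ℝ) < 1 + s * (1/t) := by positivity
      have h6 : s * (1/t) / (1 + s * (1/t)) ≤ s / t := by
        rw [div_le_iff₀ hd, mul_one_div]
        nlinarith [mul_pos (div_pos hs0 ht0) (div_pos hs0 ht0)]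
      have h5 : t ^ (-s) - t ^ (-s) * (1 + s * (1/t))⁻¹ ≤ s / t * t ^ (-s) := by
        rw [← mul_one_sub]
        have heq : 1 - (1 + s * (1/t))⁻¹ = s * (1/t) / (1 + s * (1/t)) := by field_simp; ring
        rw [heq]
        calc t ^ (-s) * (s * (1/t) / (1 + s * (1/t))) ≤ t ^ (-s) * (s / t) :=
              mul_le_mul_of_nonneg_left h6 hts.le
          _ = s / t * t ^ (-s) := by ring
      linarith only [h4, h5]
    -- stepsize condition
    have hst : s / t ≤ β * A / 2 * t ^ (-ξ') := by
      have h1 : 2 * s / (β * A) ≤ t ^ (1 - ξ') :=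
        le_trans hkey (Real.rpow_le_rpow hKpos.le htK (by linarith))
      have h2 : t ^ (1 - ξ') = t * t ^ (-ξ') := by
        rw [sub_eq_add_neg, Real.rpow_add ht0, Real.rpow_one]
      have h3 : 2 * s ≤ β * A * (t * t ^ (-ξ')) := by
        rw [← h2]
        calc 2 * s = (β * A) * (2 * s / (β * A)) := by field_simp
          _ ≤ (β * A) * t ^ (1 - ξ') := mul_le_mul_of_nonneg_left h1 (by positivity)
      rw [div_le_iff₀ ht0, show β * A / 2 * t ^ (-ξ') * t = β * A * (t * t ^ (-ξ')) / 2 by ring]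
      nlinarith [h3]
    -- combine
    rw [hcast, hrw]
    have step1 : (1 - β * A * t ^ (-ξ')) * u k ≤ (1 - β * A * t ^ (-ξ')) * (C * t ^ (-s)) :=
      mul_le_mul_of_nonneg_left ih hfac0
    have step2 : t ^ (-s) - (t + 1) ^ (-s) ≤ β * A / 2 * t ^ (-ξ') * t ^ (-s) :=
      le_trans hbern (mul_le_mul_of_nonneg_right hst hts.le)
    have step3 : C * (t ^ (-s) - (t + 1) ^ (-s)) ≤ C * (β * A / 2 * t ^ (-ξ') * t ^ (-s)) :=
      mul_le_mul_of_nonneg_left step2 hC.le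
    calc (1 - β * A * t ^ (-ξ')) * u k + A * (β * C / 2) * (t ^ (-ξ') * t ^ (-s))
        ≤ (1 - β * A * t ^ (-ξ')) * (C * t ^ (-s)) + A * (β * C / 2) * (t ^ (-ξ') * t ^ (-s)) := by
          linarith only [step1]
      _ = C * t ^ (-s) - C * (β * A / 2 * t ^ (-ξ') * t ^ (-s)) := by ring
      _ ≤ C * (t + 1) ^ (-s) := by linarith only [step3]
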